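/- Let c_7 > 0 and A > 0 be real numbers with A ≤ c_7 · Z. Suppose X, Y are complex numbers with Z := max(|X|, |Y|) > 0, that ∏_{j=1}^n |β_j| ≤ c_0 · Z^k, that i is an index (1 ≤ i ≤ n) with |β_i| = min_{1≤j≤n} |β_j|, and that A ≥ c_7 · c_{4i}. Then |β_i| ≤ c_{5i} · c_7^{n−1−k} · A^{k−n+1}. (This is the conclusion of Lemma 2 of the paper, with the constants corrected so that the implication A ≥ c_7 c_{4i} ⇒ Z ≥ c_{4i} holds.) -/

import Mathlib

open Finset

set_option maxHeartbeats 1000000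

/-- Lemma 2 of the paper (with corrected constants): if `A ≤ c₇ Z` and `A ≥ c₇ c₄ᵢ`
then `|βᵢ| ≤ c₅ᵢ · c₇^(n-1-k) · A^(k-n+1)`. -/
theorem stmt6 (n k : ℕ) (hn : 2 ≤ n) (hk : k < n)
    (α lam : Fin n → ℂ) (hα0 : ∀ j, α j ≠ 0) (hαinj : Function.Injective α)
    (c0 : ℝ) (hc0 : 0 < c0)
    (c7 A : ℝ) (hc7 : 0 < c7) (hA : 0 < A)
    (X Y : ℂ) (Z : ℝ) (hZ : Z = max (‖X‖) (‖Y‖)) (hZpos : 0 < Z)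
    (hAZ : A ≤ c7 * Z)
    (β : Fin n → ℂ) (hβ : ∀ j, β j = X - α j * Y + lam j)
    (hprod : ∏ j, ‖β j‖ ≤ c0 * Z ^ k)
    (i : Fin n)
    (hmin : ‖β i‖
      = (univ : Finset (Fin n)).inf' ⟨i, mem_univ i⟩ (fun j => ‖β j‖))
    (ε : ℝ) (hε0 : 0 < ε) (hε1 : ε < 1)
    (c1 c2 c3 : Fin n → ℝ)
    (hc1 : ∀ j, c1 j = ‖α j - α i‖ * min 1 (1 / ‖α i‖))
    (hc2 : ∀ j, c2 j = c0 ^ ((1 : ℝ) / n) * max 1 (‖α j‖ / ‖α i‖))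
    (hc3 : ∀ j, c3 j = max (‖lam j - lam i‖)
      (‖α i * lam j - α j * lam i‖ / ‖α i‖))
    (hA4 : c7 * ((univ.erase i).sup'
        (by
          refine Finset.card_pos.mp ?_
          rw [Finset.card_erase_of_mem (Finset.mem_univ i), Finset.card_univ, Fintype.card_fin]
          omega)
        (fun j => max ((2 * c2 j / (ε * c1 j)) ^ ((n : ℝ) / ((n : ℝ) - (k : ℝ))))
          (2 * c3 j / ((1 - ε) * c1 j)))) ≤ A) :
    ‖β i‖
      ≤ (2 ^ (n - 1) * c0 / ∏ j ∈ univ.erase i, c1 j) * c7 ^ (n - 1 - k)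
          * A ^ ((k : ℝ) - (n : ℝ) + 1) := by
  have hnR : (0:ℝ) < n := by positivity
  have hnkR : (k:ℝ) < (n:ℝ) := by exact_mod_cast hk
  have hαi : 0 < ‖α i‖ := by
    simpa [norm_pos_iff] using hα0 i
  -- |β i| ≤ |β j|
  have hble : ∀ j, ‖β i‖ ≤ ‖β j‖ := by
    intro j
    rw [hmin]
    exact Finset.inf'_le _ (mem_univ j)
  have hbi0 : 0 ≤ ‖β i‖ := norm_nonneg _
  -- |β i|^n ≤ c0 Z^k
  have hbin : ‖β i‖ ^ n ≤ c0 * Z ^ k := by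
    calc ‖β i‖ ^ n = ∏ _j : Fin n, ‖β i‖ := by
          rw [Finset.prod_const, Finset.card_univ, Fintype.card_fin]
      _ ≤ ∏ j, ‖β j‖ :=
          Finset.prod_le_prod (fun _ _ => hbi0) (fun j _ => hble j)
      _ ≤ c0 * Z ^ k := hprod
  -- n-th root bound
  have hbi : ‖β i‖ ≤ c0 ^ ((1:ℝ)/n) * Z ^ ((k:ℝ)/n) := by
    have h1 : ‖β i‖ = (‖β i‖ ^ n) ^ ((1:ℝ)/(n:ℝ)) := by
      rw [← Real.rpow_natCast (‖β i‖) n, ← Real.rpow_mul hbi0,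
        mul_one_div, div_self (ne_of_gt hnR), Real.rpow_one]
    rw [h1]
    have h2 : (‖β i‖ ^ n) ^ ((1:ℝ)/(n:ℝ)) ≤ (c0 * Z ^ k) ^ ((1:ℝ)/(n:ℝ)) :=
      Real.rpow_le_rpow (by positivity) hbin (by positivity)
    refine h2.trans_eq ?_
    rw [Real.mul_rpow hc0.le (by positivity), ← Real.rpow_natCast Z k,
      ← Real.rpow_mul hZpos.le, mul_one_div]
  -- Z ≥ each term of sup'
  have hsup : ∀ j ∈ univ.erase i,
      max ((2 * c2 j / (ε * c1 j)) ^ ((n : ℝ) / ((n : ℝ) - (k : ℝ))))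
        (2 * c3 j / ((1 - ε) * c1 j)) ≤ Z := by
    intro j hj
    have h1 := hA4.trans hAZ
    have h2 := le_of_mul_le_mul_left h1 hc7
    exact (Finset.le_sup' _ hj).trans h2
  -- positivity facts
  have hc1pos : ∀ j, j ≠ i → 0 < c1 j := by
    intro j hj
    rw [hc1]
    have hne : α j - α i ≠ 0 := sub_ne_zero.mpr (fun h => hj (hαinj h))
    have h1 : 0 < ‖α j - α i‖ := by
      simpa [norm_pos_iff] using hne
    have h2 : 0 < min 1 (1 / ‖α i‖) := by positivity
    positivity
  have hc2pos : ∀ j, 0 < c2 j := by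
    intro j
    rw [hc2]
    have h1 : (0:ℝ) < max 1 (‖α j‖ / ‖α i‖) :=
      lt_of_lt_of_le one_pos (le_max_left _ _)
    positivity
  -- key lower bound on |β j| for j ≠ i
  have hβlow : ∀ j, j ≠ i → c1 j * Z / 2 ≤ ‖β j‖ := by
    intro j hj
    have hji : j ∈ univ.erase i := Finset.mem_erase.mpr ⟨hj, mem_univ j⟩
    have hc1p := hc1pos j hj
    have hZ2 : 2 * c3 j / ((1 - ε) * c1 j) ≤ Z :=
      (le_max_right _ _).trans (hsup j hji)
    have hc3le : c3 j ≤ (1 - ε) * c1 j * Z / 2 := by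
      have hpos : 0 < (1 - ε) * c1 j := by
        have h1ε : 0 < 1 - ε := by linarith
        positivity
      rw [div_le_iff₀ hpos] at hZ2
      nlinarith
    have hZ1 : (2 * c2 j / (ε * c1 j)) ^ ((n : ℝ) / ((n : ℝ) - (k : ℝ))) ≤ Z :=
      (le_max_left _ _).trans (hsup j hji)
    have hbpos : 0 < 2 * c2 j / (ε * c1 j) := by
      have := hc2pos j
      positivity
    have hb2 : 2 * c2 j / (ε * c1 j) ≤ Z ^ (((n:ℝ) - (k:ℝ))/(n:ℝ)) := by
      have hnk0 : (0:ℝ) < (n:ℝ) - (k:ℝ) := by linarith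
      have h3 := Real.rpow_le_rpow (by positivity) hZ1
        (le_of_lt (by positivity : (0:ℝ) < ((n:ℝ) - (k:ℝ))/(n:ℝ)))
      rwa [← Real.rpow_mul hbpos.le,
        div_mul_div_comm, mul_comm ((n:ℝ) - (k:ℝ)) (n:ℝ), div_self
          (by positivity : (n:ℝ) * ((n:ℝ) - (k:ℝ)) ≠ 0), Real.rpow_one] at h3
    have hc2le : c2 j * Z ^ ((k:ℝ)/(n:ℝ)) ≤ ε * c1 j * Z / 2 := by
      have hpos : 0 < ε * c1 j := by positivity
      rw [div_le_iff₀ hpos] at hb2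
      have hrp : 0 < Z ^ ((k:ℝ)/(n:ℝ)) := Real.rpow_pos_of_pos hZpos _
      have hmul := mul_le_mul_of_nonneg_right hb2 hrp.le
      have hZZ : Z ^ (((n:ℝ) - (k:ℝ))/(n:ℝ)) * Z ^ ((k:ℝ)/(n:ℝ)) = Z := by
        rw [← Real.rpow_add hZpos]
        have hone : ((n:ℝ) - (k:ℝ))/(n:ℝ) + (k:ℝ)/(n:ℝ) = 1 := by field_simp; ring
        rw [hone, Real.rpow_one]
      calc c2 j * Z ^ ((k:ℝ)/(n:ℝ)) = 2 * c2 j * Z ^ ((k:ℝ)/(n:ℝ)) / 2 := by ring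
        _ ≤ Z ^ (((n:ℝ) - (k:ℝ))/(n:ℝ)) * (ε * c1 j) * Z ^ ((k:ℝ)/(n:ℝ)) / 2 := by
            linarith
        _ = ε * c1 j * (Z ^ (((n:ℝ) - (k:ℝ))/(n:ℝ)) * Z ^ ((k:ℝ)/(n:ℝ))) / 2 := by ring
        _ = ε * c1 j * Z / 2 := by rw [hZZ]
    set m : ℝ := max 1 (‖α j‖ / ‖α i‖) with hm
    have hm1 : 1 ≤ m := le_max_left _ _
    have hmle : m * ‖β i‖ ≤ ε * c1 j * Z / 2 := by
      have h1 : m * ‖β i‖ ≤ m * (c0 ^ ((1:ℝ)/n) * Z ^ ((k:ℝ)/n)) :=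
        mul_le_mul_of_nonneg_left hbi (by linarith)
      have h2 : m * (c0 ^ ((1:ℝ)/n) * Z ^ ((k:ℝ)/n)) = c2 j * Z ^ ((k:ℝ)/n) := by
        rw [hc2]; ring
      linarith [h1.trans_eq h2]
    -- main geometric inequality
    have hkey : c1 j * Z ≤ ‖β j‖ + c3 j + m * ‖β i‖ := by
      rcases le_total (‖X‖) (‖Y‖) with hxy | hxy
      · -- Z = |Y|
        have hZY : Z = ‖Y‖ := by rw [hZ, max_eq_right hxy]
        have hstep : ‖α j - α i‖ * ‖Y‖
            ≤ ‖β j‖ + ‖β i‖ + ‖lam j - lam i‖ := by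
          have heq : (α i - α j) * Y = (β j - β i) - (lam j - lam i) := by
            rw [hβ j, hβ i]; ring
          calc ‖α j - α i‖ * ‖Y‖
              = ‖(α i - α j) * Y‖ := by
                rw [norm_mul, norm_sub_rev]
            _ = ‖(β j - β i) - (lam j - lam i)‖ := by rw [heq]
            _ ≤ ‖β j - β i‖ + ‖lam j - lam i‖ :=
                norm_sub_le _ _
            _ ≤ (‖β j‖ + ‖β i‖) + ‖lam j - lam i‖ := by
                have := norm_sub_le (β j) (β i)
                linarith
            _ = ‖β j‖ + ‖β i‖ + ‖lam j - lam i‖ := by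
                ring
        have hmin1 : min 1 (1 / ‖α i‖) ≤ 1 := min_le_left _ _
        have hc1Z : c1 j * Z ≤ ‖α j - α i‖ * ‖Y‖ := by
          rw [hc1, hZY]
          have hY0 : 0 ≤ ‖Y‖ := norm_nonneg _
          have h := mul_le_mul_of_nonneg_right
            (mul_le_mul_of_nonneg_left hmin1 (norm_nonneg (α j - α i))) hY0
          simpa using h
        have hc3' : ‖lam j - lam i‖ ≤ c3 j := by
          rw [hc3]; exact le_max_left _ _
        have hmbi : ‖β i‖ ≤ m * ‖β i‖ := by
          nlinarith
        linarith
      · -- Z = |X|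
        have hZX : Z = ‖X‖ := by rw [hZ, max_eq_left hxy]
        have hstep : ‖α j - α i‖ * ‖X‖
            ≤ ‖α i‖ * ‖β j‖ + ‖α j‖ * ‖β i‖
              + ‖α i * lam j - α j * lam i‖ := by
          have heq : (α i - α j) * X
              = (α i * β j - α j * β i) - (α i * lam j - α j * lam i) := by
            rw [hβ j, hβ i]; ring
          calc ‖α j - α i‖ * ‖X‖
              = ‖(α i - α j) * X‖ := by
                rw [norm_mul, norm_sub_rev]
            _ = ‖(α i * β j - α j * β i) - (α i * lam j - α j * lam i)‖ := by
                rw [heq]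
            _ ≤ ‖α i * β j - α j * β i‖
                  + ‖α i * lam j - α j * lam i‖ :=
                norm_sub_le _ _
            _ ≤ (‖α i‖ * ‖β j‖
                  + ‖α j‖ * ‖β i‖)
                  + ‖α i * lam j - α j * lam i‖ := by
                have h := norm_sub_le (α i * β j) (α j * β i)
                rw [norm_mul, norm_mul] at h
                linarith
            _ = _ := by ring
        have hmm : ‖α j‖ ≤ m * ‖α i‖ := by
          have h1 : ‖α j‖ / ‖α i‖ ≤ m := le_max_right _ _
          rw [div_le_iff₀ hαi] at h1
          linarith
        have hLc3 : ‖α i * lam j - α j * lam i‖ ≤ c3 j * ‖α i‖ := by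
          have h1 : ‖α i * lam j - α j * lam i‖ / ‖α i‖ ≤ c3 j := by
            rw [hc3]; exact le_max_right _ _
          rw [div_le_iff₀ hαi] at h1
          linarith
        have hminαi : min 1 (1 / ‖α i‖) * ‖α i‖ ≤ 1 := by
          have h1 : min 1 (1 / ‖α i‖) ≤ 1 / ‖α i‖ :=
            min_le_right _ _
          calc min 1 (1 / ‖α i‖) * ‖α i‖
              ≤ 1 / ‖α i‖ * ‖α i‖ :=
                mul_le_mul_of_nonneg_right h1 hαi.le
            _ = 1 := by field_simp
        have hfinal : c1 j * Z * ‖α i‖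
            ≤ (‖β j‖ + c3 j + m * ‖β i‖) * ‖α i‖ := by
          have hX0 : 0 ≤ ‖X‖ := norm_nonneg _
          have ha0 : 0 ≤ ‖α j - α i‖ := norm_nonneg _
          have hbj0 : 0 ≤ ‖β j‖ := norm_nonneg _
          have e1 : c1 j * Z * ‖α i‖
              = ‖α j - α i‖
                * (min 1 (1 / ‖α i‖) * ‖α i‖) * ‖X‖ := by
            rw [hc1, hZX]; ring
          rw [e1]
          have e2 : ‖α j - α i‖
              * (min 1 (1 / ‖α i‖) * ‖α i‖) * ‖X‖
              ≤ ‖α j - α i‖ * ‖X‖ := by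
            have h := mul_le_mul_of_nonneg_right
              (mul_le_mul_of_nonneg_left hminαi ha0) hX0
            simpa using h
          refine e2.trans (hstep.trans ?_)
          have h1 := mul_le_mul_of_nonneg_right hmm hbi0
          nlinarith [h1, hLc3]
        exact le_of_mul_le_mul_right hfinal hαi
    linarith
  -- product lower bound
  have hprodc1 : 0 < ∏ j ∈ univ.erase i, c1 j :=
    Finset.prod_pos (fun j hj => hc1pos j (Finset.mem_erase.mp hj).1)
  have hcard : (univ.erase i).card = n - 1 := by
    rw [Finset.card_erase_of_mem (mem_univ i), Finset.card_univ, Fintype.card_fin]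
  have hplow : (∏ j ∈ univ.erase i, c1 j) * (Z/2)^(n-1)
      ≤ ∏ j ∈ univ.erase i, ‖β j‖ := by
    calc (∏ j ∈ univ.erase i, c1 j) * (Z/2)^(n-1)
        = ∏ j ∈ univ.erase i, (c1 j * (Z/2)) := by
          rw [Finset.prod_mul_distrib, Finset.prod_const, hcard]
      _ ≤ ∏ j ∈ univ.erase i, ‖β j‖ := by
          refine Finset.prod_le_prod (fun j hj => ?_) (fun j hj => ?_)
          · exact mul_nonneg (hc1pos j (Finset.mem_erase.mp hj).1).le (by positivity)
          · have := hβlow j (Finset.mem_erase.mp hj).1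
            linarith
  have hsplit : ‖β i‖ * ∏ j ∈ univ.erase i, ‖β j‖ ≤ c0 * Z ^ k := by
    rw [Finset.mul_prod_erase univ (fun j => ‖β j‖) (mem_univ i)]
    exact hprod
  have hQpos : 0 < (∏ j ∈ univ.erase i, c1 j) * (Z/2)^(n-1) := by positivity
  have hfinZ : ‖β i‖
      ≤ c0 * Z ^ k / ((∏ j ∈ univ.erase i, c1 j) * (Z/2)^(n-1)) := by
    rw [le_div_iff₀ hQpos]
    calc ‖β i‖ * ((∏ j ∈ univ.erase i, c1 j) * (Z/2)^(n-1))
        ≤ ‖β i‖ * ∏ j ∈ univ.erase i, ‖β j‖ :=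
          mul_le_mul_of_nonneg_left hplow hbi0
      _ ≤ c0 * Z ^ k := hsplit
  -- rewrite RHS in terms of rpow
  have hcastn1 : ((n-1:ℕ):ℝ) = (n:ℝ) - 1 := by
    have h1 : 1 ≤ n := by omega
    push_cast [h1]
    ring
  have hZe : Z ^ ((k:ℝ) - (n:ℝ) + 1) = Z ^ k / Z ^ (n-1) := by
    have he : (k:ℝ) - (n:ℝ) + 1 = (k:ℝ) - ((n-1:ℕ):ℝ) := by rw [hcastn1]; ring
    rw [he, Real.rpow_sub hZpos, Real.rpow_natCast, Real.rpow_natCast]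
  have heq : c0 * Z ^ k / ((∏ j ∈ univ.erase i, c1 j) * (Z/2)^(n-1))
      = (2 ^ (n - 1) * c0 / ∏ j ∈ univ.erase i, c1 j) * Z ^ ((k:ℝ) - (n:ℝ) + 1) := by
    rw [hZe, div_pow]
    have h2 : (2:ℝ)^(n-1) ≠ 0 := by positivity
    have hZn : Z^(n-1) ≠ 0 := by positivity
    field_simp
  have hC : 0 < 2^(n-1) * c0 / ∏ j ∈ univ.erase i, c1 j := by positivity
  have hZA : A / c7 ≤ Z := by
    rw [div_le_iff₀ hc7]
    linarith
  have hexp : (k:ℝ) - (n:ℝ) + 1 ≤ 0 := by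
    have h1 : (k:ℝ) + 1 ≤ (n:ℝ) := by exact_mod_cast hk
    linarith
  have hrZ : Z ^ ((k:ℝ)-(n:ℝ)+1) ≤ (A/c7) ^ ((k:ℝ)-(n:ℝ)+1) :=
    Real.rpow_le_rpow_of_nonpos (by positivity) hZA hexp
  have hcast : ((n-1-k:ℕ):ℝ) = -((k:ℝ)-(n:ℝ)+1) := by
    have h1 : 1 + k ≤ n := by omega
    have h2 : n - 1 - k = n - (1 + k) := by omega
    rw [h2, Nat.cast_sub h1]
    push_cast
    ring
  have hAc : (A/c7) ^ ((k:ℝ)-(n:ℝ)+1) = c7 ^ (n-1-k) * A ^ ((k:ℝ)-(n:ℝ)+1) := by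
    have h3 : (c7:ℝ) ^ (n-1-k) = (c7 ^ ((k:ℝ)-(n:ℝ)+1))⁻¹ := by
      rw [← Real.rpow_natCast c7 (n-1-k), hcast, Real.rpow_neg hc7.le]
    rw [Real.div_rpow hA.le hc7.le, h3, div_eq_mul_inv, mul_comm]
  calc ‖β i‖
      ≤ c0 * Z ^ k / ((∏ j ∈ univ.erase i, c1 j) * (Z/2)^(n-1)) := hfinZ
    _ = (2 ^ (n - 1) * c0 / ∏ j ∈ univ.erase i, c1 j) * Z ^ ((k:ℝ) - (n:ℝ) + 1) := heq
    _ ≤ (2 ^ (n - 1) * c0 / ∏ j ∈ univ.erase i, c1 j) * (A/c7) ^ ((k:ℝ)-(n:ℝ)+1) :=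
        mul_le_mul_of_nonneg_left hrZ hC.le
    _ = (2 ^ (n - 1) * c0 / ∏ j ∈ univ.erase i, c1 j) * c7 ^ (n - 1 - k)
          * A ^ ((k : ℝ) - (n : ℝ) + 1) := by
        rw [hAc]; ring
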